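/- Assume E(|u|²) < ∞ μ-a.e. and let v = E(u). If λ ∈ ℂ, λ ≠ 0, belongs to the essential range of v, then for every ε > 0 there exists f ∈ D(EM_u) with f ≠ 0 and ‖λ·f − EM_u f‖_{L²(μ)} ≤ ε·‖f‖_{L²(μ)}. (Hence λ − EM_u has no bounded inverse and λ belongs to the spectrum of EM_u.) -/

import Mathlib

open MeasureTheory Filter ENNReal NNReal

noncomputable section

variable {X : Type*}

/-- A set `A` in the sub-σ-algebra `m` is *admissible* for the weight `u` if
`μ A + ∫_A |u|² dμ < ∞`. -/
def Admissible (m : MeasurableSpace X) [m0 : MeasurableSpace X] (μ : Measure X)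
    (u : X → ℂ) (A : Set X) : Prop :=
  MeasurableSet[m] A ∧ μ A + ∫⁻ x in A, (‖u x‖₊ : ℝ≥0∞) ^ 2 ∂μ < ⊤

/-- `gf` is a version of `E(u·f)`, i.e. `gf` is an `m`-measurable function in `L²(μ)` with
`∫_A u·f dμ = ∫_A gf dμ` for every admissible `A`.  `f ∈ D(EM_u)` iff `f ∈ L²(μ)` and such a
`gf` exists. -/
def IsWCE (m : MeasurableSpace X) [m0 : MeasurableSpace X] (μ : Measure X)
    (u f gf : X → ℂ) : Prop :=
  StronglyMeasurable[m] gf ∧ MemLp gf 2 μ ∧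
    ∀ A : Set X, Admissible m μ u A → ∫ x in A, u x * f x ∂μ = ∫ x in A, gf x ∂μ

/-- With `E(|u|²) < ∞` a.e. and `v = E(u)`, if `λ ≠ 0` is in the essential
range of `v`, then for every `ε > 0` there is `0 ≠ f ∈ D(EM_u)` with
`‖λ·f − EM_u f‖₂ ≤ ε·‖f‖₂`. -/
theorem stmt11 (m : MeasurableSpace X) [m0 : MeasurableSpace X] (hm : m ≤ m0)
    (μ : Measure X) [SigmaFinite μ] [SigmaFinite (μ.trim hm)]
    (u : X → ℂ) (hu : Measurable u)
    (g : X → ℝ≥0∞) (hgm : Measurable[m] g)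
    (hg : ∀ A : Set X, MeasurableSet[m] A →
      ∫⁻ x in A, (‖u x‖₊ : ℝ≥0∞) ^ 2 ∂μ = ∫⁻ x in A, g x ∂μ)
    (hgfin : ∀ᵐ x ∂μ, g x < ⊤)
    (v : X → ℂ) (hvm : StronglyMeasurable[m] v)
    (hv : ∀ A : Set X, Admissible m μ u A → ∫ x in A, u x ∂μ = ∫ x in A, v x ∂μ)
    (lam : ℂ) (hlam : lam ≠ 0)
    (hess : ∀ ε : ℝ, 0 < ε → 0 < μ {x | ‖v x - lam‖ < ε}) :
    ∀ ε : ℝ, 0 < ε → ∃ f gf : X → ℂ, MemLp f 2 μ ∧ IsWCE m μ u f gf ∧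
      ¬ f =ᵐ[μ] 0 ∧
      eLpNorm (fun x => lam * f x - gf x) 2 μ ≤ ENNReal.ofReal ε * eLpNorm f 2 μ := by
  intro ε hε
  -- the set where v is ε-close to lam
  set S : Set X := {x | ‖v x - lam‖ < ε} with hSdef
  have hSm : MeasurableSet[m] S := by
    have hmeas : Measurable[m] fun x => ‖v x - lam‖ :=
      ((hvm.sub stronglyMeasurable_const).norm).measurable
    exact hmeas measurableSet_Iio
  have hS0 : 0 < μ S := hess ε hε
  -- find n, k such that A = S ∩ {g ≤ n} ∩ T k has positive measure
  set T : ℕ → Set X := spanningSets (μ.trim hm) with hTdef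
  have hTm : ∀ k, MeasurableSet[m] (T k) := fun k => measurableSet_spanningSets _ k
  have hTfin : ∀ k, μ (T k) < ⊤ := by
    intro k
    rw [← trim_measurableSet_eq hm (hTm k)]
    exact measure_spanningSets_lt_top _ k
  have hcover : S ∩ {x | g x < ⊤} ⊆ ⋃ n : ℕ, ⋃ k : ℕ, (S ∩ {x | g x ≤ (n : ℝ≥0∞)} ∩ T k) := by
    rintro x ⟨hxS, hxg⟩
    obtain ⟨n, hn⟩ := ENNReal.exists_nat_gt hxg.ne
    have hxT : x ∈ ⋃ k, T k := by
      rw [hTdef, iUnion_spanningSets]; trivial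
    obtain ⟨k, hk⟩ := Set.mem_iUnion.1 hxT
    exact Set.mem_iUnion.2 ⟨n, Set.mem_iUnion.2 ⟨k, ⟨hxS, hn.le⟩, hk⟩⟩
  have hSg0 : 0 < μ (S ∩ {x | g x < ⊤}) := by
    by_contra h
    push_neg at h
    have h0 : μ (S ∩ {x | g x < ⊤}) = 0 := le_antisymm h (zero_le)
    have h1 : μ {x | ¬ g x < ⊤} = 0 := by
      rw [← ae_iff]; exact hgfin
    have : μ S ≤ μ (S ∩ {x | g x < ⊤}) + μ {x | ¬ g x < ⊤} := by
      refine le_trans (measure_mono ?_) (measure_union_le _ _)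
      intro x hx
      by_cases hgx : g x < ⊤
      · exact Or.inl ⟨hx, hgx⟩
      · exact Or.inr hgx
    rw [h0, h1, add_zero] at this
    exact absurd (le_antisymm this (zero_le)) hS0.ne'
  have hUnion : 0 < μ (⋃ n : ℕ, ⋃ k : ℕ, (S ∩ {x | g x ≤ (n : ℝ≥0∞)} ∩ T k)) :=
    lt_of_lt_of_le hSg0 (measure_mono hcover)
  have hex : ∃ n k : ℕ, 0 < μ (S ∩ {x | g x ≤ (n : ℝ≥0∞)} ∩ T k) := by
    by_contra h
    push_neg at h
    have : μ (⋃ n : ℕ, ⋃ k : ℕ, (S ∩ {x | g x ≤ (n : ℝ≥0∞)} ∩ T k)) = 0 := by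
      refine measure_iUnion_null fun n => measure_iUnion_null fun k => ?_
      exact le_antisymm (h n k) (zero_le)
    rw [this] at hUnion
    exact lt_irrefl _ hUnion
  obtain ⟨n, k, hA0⟩ := hex
  set A : Set X := S ∩ {x | g x ≤ (n : ℝ≥0∞)} ∩ T k with hAdef
  have hAm : MeasurableSet[m] A :=
    (hSm.inter (hgm measurableSet_Iic)).inter (hTm k)
  have hAm0 : MeasurableSet A := hm _ hAm
  have hAfin : μ A < ⊤ := lt_of_le_of_lt (measure_mono Set.inter_subset_right) (hTfin k)
  have hgA : ∫⁻ x in A, g x ∂μ ≤ (n : ℝ≥0∞) * μ A := by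
    calc ∫⁻ x in A, g x ∂μ ≤ ∫⁻ _ in A, (n : ℝ≥0∞) ∂μ := by
          refine setLIntegral_mono measurable_const fun x hx => ?_
          exact hx.1.2
      _ = (n : ℝ≥0∞) * μ A := by rw [setLIntegral_const]
  have hAadm : Admissible m μ u A := by
    refine ⟨hAm, ?_⟩
    rw [hg A hAm]
    exact ENNReal.add_lt_top.2 ⟨hAfin,
      lt_of_le_of_lt hgA (ENNReal.mul_lt_top (ENNReal.natCast_ne_top n).lt_top hAfin)⟩
  -- define f and gf
  refine ⟨A.indicator (fun _ => (1 : ℂ)), A.indicator v, ?_, ⟨?_, ?_, ?_⟩, ?_, ?_⟩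
  · exact memLp_indicator_const 2 hAm0 1 (Or.inr hAfin.ne)
  · exact hvm.indicator hAm
  · -- Memℒp of A.indicator v
    have hbound : MemLp (A.indicator (fun _ => (‖lam‖ + ε : ℝ))) 2 μ :=
      memLp_indicator_const 2 hAm0 _ (Or.inr hAfin.ne)
    refine MemLp.of_le hbound
      (((hvm.mono hm).indicator hAm0).aestronglyMeasurable) ?_
    filter_upwards with x
    by_cases hx : x ∈ A
    · simp only [Set.indicator_of_mem hx]
      have h1 : ‖v x‖ ≤ ‖v x - lam‖ + ‖lam‖ := by
        calc ‖v x‖ = ‖(v x - lam) + lam‖ := by ring_nf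
          _ ≤ ‖v x - lam‖ + ‖lam‖ := norm_add_le _ _
      have h2 : ‖v x - lam‖ < ε := hx.1.1
      have h3 : (0:ℝ) ≤ ‖lam‖ + ε := by positivity
      rw [Real.norm_of_nonneg h3]
      linarith
    · simp [Set.indicator_of_notMem hx]
  · -- the defining integral identity
    intro B hB
    have hBA : Admissible m μ u (B ∩ A) := by
      refine ⟨hB.1.inter hAm, ?_⟩
      refine lt_of_le_of_lt ?_ hB.2
      exact add_le_add (measure_mono Set.inter_subset_left)
        (lintegral_mono_set Set.inter_subset_left)
    have h1 : (fun x => u x * A.indicator (fun _ => (1:ℂ)) x) = A.indicator u := by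
      funext x
      by_cases hx : x ∈ A <;> simp [Set.indicator_of_mem, Set.indicator_of_notMem, hx]
    rw [h1, setIntegral_indicator hAm0, setIntegral_indicator hAm0]
    exact hv _ hBA
  · -- f is not a.e. zero
    intro h
    have hsub : A ⊆ {x | A.indicator (fun _ => (1:ℂ)) x ≠ 0} := by
      intro x hx
      simp only [Set.mem_setOf_eq, Set.indicator_of_mem hx]
      exact one_ne_zero
    have h0 : μ {x | A.indicator (fun _ => (1:ℂ)) x ≠ 0} = 0 := by
      rw [← ae_iff] at *
      filter_upwards [h] with x hx
      simpa using hx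
    exact absurd (le_antisymm (h0 ▸ measure_mono hsub) (zero_le)) hA0.ne'
  · -- the norm estimate
    have key : ∀ x, ‖lam * A.indicator (fun _ => (1:ℂ)) x - A.indicator v x‖
        ≤ ‖((ε : ℂ) • A.indicator (fun _ => (1:ℂ))) x‖ := by
      intro x
      by_cases hx : x ∈ A
      · simp only [Set.indicator_of_mem hx, mul_one, Pi.smul_apply, smul_eq_mul]
        have h2 : ‖v x - lam‖ < ε := hx.1.1
        rw [← norm_neg, neg_sub]
        simp only [Complex.norm_real, Real.norm_of_nonneg hε.le]
        simpa using h2.le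
      · simp [Set.indicator_of_notMem hx]
    calc eLpNorm (fun x => lam * A.indicator (fun _ => (1:ℂ)) x - A.indicator v x) 2 μ
        ≤ eLpNorm ((ε : ℂ) • A.indicator (fun _ => (1:ℂ))) 2 μ :=
          eLpNorm_mono key
      _ = ‖(ε : ℂ)‖₊ • eLpNorm (A.indicator (fun _ => (1:ℂ))) 2 μ :=
          eLpNorm_const_smul _ _ _ _
      _ = ENNReal.ofReal ε * eLpNorm (A.indicator (fun _ => (1:ℂ))) 2 μ := by
          rw [ENNReal.smul_def, smul_eq_mul]
          congr 1
          rw [show ‖(ε : ℂ)‖₊ = ‖ε‖₊ by ext; simp]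
          exact Real.enorm_eq_ofReal hε.le
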